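/- Let S be a multigraded polynomial ring k[T_1,…,T_n] graded by a finitely generated abelian group D of rank r via γ: ℤ^n → D, e_i ↦ deg(T_i), with M = ker(γ) of rank n − r. For a squarefree relevant monomial f = ∏_{i ∈ J_f} T_i with |J_f| = r, let σ_f ⊆ Hom(M, ℝ) be the cone generated by the restrictions to M of the coordinate projections pr_i for i ∈ {1,…,n} \ J_f. Then σ_f has dimension n − r, i.e. σ_f is a full-dimensional cone in Hom(M, ℝ) ≅ ℝ^{n−r}. -/

import Mathlib

open scoped TensorProduct

/-- The canonical map `D → D_ℝ = ℝ ⊗[ℤ] D`. -/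
noncomputable def toReal (D : Type*) [AddCommGroup D] (d : D) : ℝ ⊗[ℤ] D :=
  (1 : ℝ) ⊗ₜ[ℤ] d

/-- For a `D`-graded polynomial ring `k[T_1,…,T_n]` graded via `γ : ℤ^n → D` with
`M = ker γ`, and a squarefree relevant monomial `f` with support `J` of cardinality
`r = rank D`, the cone `σ_f` generated by the restricted coordinate projections
`pr_i|_M` for `i ∉ J` is full-dimensional in `Hom(M, ℝ) ≅ ℝ^{n−r}`. -/
theorem sigma_cone_full_dimensional
    {D : Type*} [AddCommGroup D] [AddGroup.FG D]
    (n r : ℕ) (hrn : r < n)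
    (γ : (Fin n → ℤ) →ₗ[ℤ] D)
    (hrk : Module.finrank ℝ (ℝ ⊗[ℤ] D) = r)
    (J : Finset (Fin n)) (hJcard : J.card = r)
    -- `f = ∏_{i ∈ J} T_i` is relevant: the degrees of its variables span `D_ℝ`
    (hrel : Submodule.span ℝ ((fun i => toReal D (γ (Pi.single i 1))) '' ↑J) = ⊤)
    (M : Submodule ℤ (Fin n → ℤ)) (hM : M = LinearMap.ker γ)
    -- the realification `M_ℝ ⊆ ℝ^n` of `M`
    (MR : Submodule ℝ (Fin n → ℝ))
    (hMR : MR = Submodule.span ℝ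
      ((fun v : Fin n → ℤ => fun i => (v i : ℝ)) '' (M : Set (Fin n → ℤ))))
    (hMrk : Module.finrank ℝ MR = n - r) :
    Submodule.span ℝ {φ : Module.Dual ℝ MR |
        ∃ i ∉ J, φ = (LinearMap.proj i : (Fin n → ℝ) →ₗ[ℝ] ℝ).comp MR.subtype} = ⊤ ∧
    Module.finrank ℝ (Module.Dual ℝ MR) = n - r := by
  classical
  -- the real extension of γ
  set g : (Fin n → ℝ) →ₗ[ℝ] (ℝ ⊗[ℤ] D) :=
    (Pi.basisFun ℝ (Fin n)).constr ℝ (fun i => toReal D (γ (Pi.single i 1))) with hg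
  have hgapply : ∀ x : Fin n → ℝ,
      g x = ∑ i : Fin n, x i • toReal D (γ (Pi.single i 1)) := by
    intro x
    rw [hg, Module.Basis.constr_apply_fintype]
    simp [Pi.basisFun_equivFun]
  -- g vanishes on MR
  have hgM : ∀ x ∈ MR, g x = 0 := by
    intro x hx
    rw [hMR] at hx
    refine Submodule.span_induction ?_ (by simp) (fun a b _ _ ha hb => by simp [ha, hb])
      (fun c a _ ha => by simp [ha]) hx
    rintro _ ⟨w, hw, rfl⟩
    rw [hM] at hw
    replace hw : γ w = 0 := hw
    have : g (fun i => (w i : ℝ)) = (1 : ℝ) ⊗ₜ[ℤ] (γ w) := by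
      rw [hgapply]
      have : ∀ i : Fin n, ((w i : ℝ)) • toReal D (γ (Pi.single i 1))
          = (1 : ℝ) ⊗ₜ[ℤ] (w i • γ (Pi.single i 1)) := by
        intro i
        rw [toReal, TensorProduct.smul_tmul', smul_eq_mul, mul_one,
          show ((w i : ℝ)) = (w i) • (1 : ℝ) by simp, TensorProduct.smul_tmul]
      rw [Finset.sum_congr rfl fun i _ => this i, ← TensorProduct.tmul_sum]
      congr 1
      have : ∀ i : Fin n, w i • γ (Pi.single i 1) = γ (Pi.single i (w i)) := by
        intro i
        rw [← map_smul]
        congr 1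
        rw [← Pi.single_smul, smul_eq_mul, mul_one]
      rw [Finset.sum_congr rfl fun i _ => this i, ← map_sum]
      congr 1
      exact Finset.univ_sum_single w
    rw [this, hw, TensorProduct.tmul_zero]
  -- the degrees over J are linearly independent
  haveI : Module.Finite ℤ D := Module.Finite.iff_addGroup_fg.mpr ‹_›
  haveI : FiniteDimensional ℝ (ℝ ⊗[ℤ] D) := inferInstance
  have hli : LinearIndependent ℝ (fun i : J => toReal D (γ (Pi.single (i : Fin n) 1))) := by
    apply linearIndependent_of_top_le_span_of_card_eq_finrank
    · have heq : (fun i => toReal D (γ (Pi.single i 1))) '' ↑J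
          = Set.range fun i : J => toReal D (γ (Pi.single (i : Fin n) 1)) := by
        ext y
        constructor
        · rintro ⟨i, hi, rfl⟩; exact ⟨⟨i, hi⟩, rfl⟩
        · rintro ⟨⟨i, hi⟩, rfl⟩; exact ⟨i, hi, rfl⟩
      rw [← heq, hrel]
    · rw [Fintype.card_coe, hJcard, hrk]
  -- key claim: an element of MR supported on J is zero
  have hkey : ∀ x ∈ MR, (∀ i ∉ J, x i = 0) → x = 0 := by
    intro x hx hsupp
    have hall : ∑ i : Fin n, x i • toReal D (γ (Pi.single i 1)) = 0 := by
      rw [← hgapply]; exact hgM x hx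
    have hsub : ∑ i ∈ J, x i • toReal D (γ (Pi.single i 1))
        = ∑ i : Fin n, x i • toReal D (γ (Pi.single i 1)) :=
      Finset.sum_subset J.subset_univ (fun i _ hi => by rw [hsupp i hi, zero_smul])
    have h0 : ∑ i : J, x (i : Fin n) • toReal D (γ (Pi.single (i : Fin n) 1)) = 0 := by
      rw [Finset.sum_coe_sort J (fun i => x i • toReal D (γ (Pi.single i 1))), hsub, hall]
    have hcoef := (Fintype.linearIndependent_iff.mp hli) (fun i => x (i : Fin n)) h0
    funext i
    by_cases hi : i ∈ J
    · exact hcoef ⟨i, hi⟩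
    · exact hsupp i hi
  haveI : FiniteDimensional ℝ MR := inferInstance
  constructor
  · -- the projection to the complement coordinates
    set π : MR →ₗ[ℝ] ({i : Fin n // i ∉ J} → ℝ) :=
      LinearMap.pi (fun j : {i : Fin n // i ∉ J} =>
        (LinearMap.proj (j : Fin n) : (Fin n → ℝ) →ₗ[ℝ] ℝ).comp MR.subtype) with hπ
    have hπinj : Function.Injective π := by
      rw [← LinearMap.ker_eq_bot]
      apply (Submodule.eq_bot_iff _).mpr
      rintro ⟨x, hx⟩ hxk
      have hx0 : ∀ i ∉ J, x i = 0 := by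
        intro i hi
        have := congrFun (LinearMap.mem_ker.mp hxk) ⟨i, hi⟩
        simpa [hπ] using this
      exact Subtype.ext (hkey x hx hx0)
    have hsurj : Function.Surjective π.dualMap :=
      LinearMap.dualMap_surjective_of_injective hπinj
    rw [eq_top_iff]
    rintro φ -
    obtain ⟨ψ, rfl⟩ := hsurj φ
    -- express ψ in the dual basis of the standard basis
    have hψ : ψ ∈ Submodule.span ℝ
        (Set.range (Pi.basisFun ℝ {i : Fin n // i ∉ J}).dualBasis) := by
      rw [Module.Basis.span_eq]
      trivial
    have := Submodule.mem_map_of_mem (f := π.dualMap) hψ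
    rw [Submodule.map_span] at this
    refine Submodule.span_mono ?_ this
    rintro _ ⟨_, ⟨j, rfl⟩, rfl⟩
    refine ⟨(j : Fin n), j.2, ?_⟩
    apply LinearMap.ext
    intro v
    simp [LinearMap.dualMap_apply, Module.Basis.dualBasis_apply, hπ, Pi.basisFun_repr]
  · rw [Subspace.dual_finrank_eq, hMrk]
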